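/- Under the degeneracy assumptions on a, b, d, and for λ < 1/C_HP, the norms ‖u‖²_{1,1/σ} = ∫₀¹ u²/σ + ∫₀¹ η(u')², ‖u‖₁² = ∫₀¹ u²/σ + ∫₀¹ η(u')² − λ∫₀¹ u²/(σd), ‖u‖²_{1,∘} = ∫₀¹ (u')², and ‖u‖²_{1,•} = ∫₀¹ η(u')² are pairwise equivalent on H¹_{1/σ}(0,1) = L²_{1/σ}(0,1) ∩ H¹₀(0,1). -/

import Mathlib

open Set MeasureTheory

lemma aux_sq_integral_abs_le (f : ℝ → ℝ) (x : ℝ) (hx : 0 < x)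
    (hf : IntegrableOn f (Ioc 0 x)) (hf2 : IntegrableOn (fun t => f t ^ 2) (Ioc 0 x)) :
    (∫ t in Ioc (0:ℝ) x, |f t|) ^ 2 ≤ x * ∫ t in Ioc (0:ℝ) x, f t ^ 2 := by
  set T := ∫ t in Ioc (0:ℝ) x, |f t| with hTdef
  set I := ∫ t in Ioc (0:ℝ) x, f t ^ 2 with hIdef
  have hT : 0 ≤ T := setIntegral_nonneg measurableSet_Ioc (fun t _ => abs_nonneg _)
  have hI : 0 ≤ I := setIntegral_nonneg measurableSet_Ioc (fun t _ => sq_nonneg _)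
  have hvol : (volume (Ioc (0:ℝ) x)).toReal = x := by
    simp [Real.volume_Ioc, hx.le]
  have key : ∀ s : ℝ, 0 < s → 2 * s * T ≤ s ^ 2 * x + I := by
    intro s hs
    have h1 : (∫ t in Ioc (0:ℝ) x, 2 * s * |f t|) ≤ ∫ t in Ioc (0:ℝ) x, (s ^ 2 + f t ^ 2) := by
      apply setIntegral_mono_on (hf.abs.const_mul _)
        ((integrableOn_const (by simp [Real.volume_Ioc])).add hf2) measurableSet_Ioc
      intro t _
      simp only [Pi.add_apply]
      nlinarith [sq_nonneg (s - |f t|), sq_abs (f t)]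
    have h2 : (∫ t in Ioc (0:ℝ) x, 2 * s * |f t|) = 2 * s * T := by
      rw [hTdef, ← integral_const_mul]
    have h3 : (∫ t in Ioc (0:ℝ) x, (s ^ 2 + f t ^ 2)) = s ^ 2 * x + I := by
      have hc : IntegrableOn (fun _ : ℝ => s ^ 2) (Ioc (0:ℝ) x) :=
        integrableOn_const (by simp [Real.volume_Ioc])
      rw [integral_add hc hf2,
        setIntegral_const, measureReal_def, hvol, smul_eq_mul, mul_comm]
    rw [h2, h3] at h1
    exact h1
  rcases eq_or_lt_of_le hT with h0 | hTpos
  · rw [← h0]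
    simpa using mul_nonneg hx.le hI
  · have hx' : x ≠ 0 := hx.ne'
    have hs : 0 < T / x := div_pos hTpos hx
    have hkey := key (T / x) hs
    set s := T / x with hsdef
    have hT' : T = s * x := (div_mul_cancel₀ T hx').symm
    rw [hT'] at hkey ⊢
    have h6 : s ^ 2 * x ≤ I := by nlinarith [hkey]
    nlinarith [mul_le_mul_of_nonneg_right h6 hx.le]

set_option maxHeartbeats 1000000 in
/-- equivalence of the four norms
`‖u‖²_{1,1/σ} = ∫ u²/σ + ∫ η (u')²`,
`‖u‖₁² = ∫ u²/σ + ∫ η (u')² − λ ∫ u²/(σ d)`,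
`‖u‖²_{1,∘} = ∫ (u')²` and `‖u‖²_{1,•} = ∫ η (u')²`
on `H¹_{1/σ}(0,1) = L²_{1/σ}(0,1) ∩ H¹₀(0,1)`, for `λ < 1/C_HP`. -/
theorem statement4 (a b d : ℝ → ℝ) (K₁ K₂ : ℝ) (lam CHP : ℝ)
    (ha_cont : ContinuousOn a (Icc 0 1)) (hb_cont : ContinuousOn b (Icc 0 1))
    (hd_cont : ContinuousOn d (Icc 0 1))
    (ha0 : a 0 = 0) (hd0 : d 0 = 0)
    (ha_pos : ∀ x ∈ Ioc (0:ℝ) 1, 0 < a x)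
    (hd_pos : ∀ x ∈ Ioc (0:ℝ) 1, 0 < d x)
    (hba : IntegrableOn (fun x => b x / a x) (Ioo 0 1))
    (hK₁ : K₁ ∈ Ioo (0:ℝ) 2) (hK₂ : K₂ ∈ Ioo (0:ℝ) 2) (hsum : K₁ + K₂ ≤ 2)
    (hmona : ∃ δ > 0, MonotoneOn (fun x : ℝ => x ^ K₁ / a x) (Ioo (0:ℝ) δ))
    (hmond : ∃ δ > 0, MonotoneOn (fun x : ℝ => x ^ K₂ / d x) (Ioo (0:ℝ) δ))
    (η σ : ℝ → ℝ)
    (hη : ∀ x, η x = Real.exp (∫ s in (1/2:ℝ)..x, b s / a s))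
    (hσ : ∀ x, σ x = a x / η x)
    (hCHP : 0 < CHP)
    -- `C_HP` is a Hardy–Poincaré constant:
    (hHardy : ∀ u u' : ℝ → ℝ,
      (∀ x ∈ Ioo (0:ℝ) 1, HasDerivAt u (u' x) x) →
      ContinuousOn u (Icc 0 1) → u 0 = 0 → u 1 = 0 →
      IntegrableOn (fun x => u x ^ 2 / σ x) (Ioo 0 1) →
      IntegrableOn (fun x => η x * u' x ^ 2) (Ioo 0 1) →
      ∫ x in (0:ℝ)..1, u x ^ 2 / (σ x * d x) ≤
        CHP * ∫ x in (0:ℝ)..1, η x * u' x ^ 2)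
    (hlam : lam < 1 / CHP) :
    ∃ C > 0, ∀ u u' : ℝ → ℝ,
      (∀ x ∈ Ioo (0:ℝ) 1, HasDerivAt u (u' x) x) →
      ContinuousOn u (Icc 0 1) → u 0 = 0 → u 1 = 0 →
      IntegrableOn (fun x => u x ^ 2 / σ x) (Ioo 0 1) →
      IntegrableOn (fun x => u' x ^ 2) (Ioo 0 1) →
      (((∫ x in (0:ℝ)..1, u x ^ 2 / σ x) + ∫ x in (0:ℝ)..1, η x * u' x ^ 2) ≤
          C * (((∫ x in (0:ℝ)..1, u x ^ 2 / σ x) +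
            ∫ x in (0:ℝ)..1, η x * u' x ^ 2) -
            lam * ∫ x in (0:ℝ)..1, u x ^ 2 / (σ x * d x)) ∧
        (((∫ x in (0:ℝ)..1, u x ^ 2 / σ x) + ∫ x in (0:ℝ)..1, η x * u' x ^ 2) -
            lam * ∫ x in (0:ℝ)..1, u x ^ 2 / (σ x * d x)) ≤
          C * ((∫ x in (0:ℝ)..1, u x ^ 2 / σ x) +
            ∫ x in (0:ℝ)..1, η x * u' x ^ 2)) ∧
      (((∫ x in (0:ℝ)..1, u x ^ 2 / σ x) + ∫ x in (0:ℝ)..1, η x * u' x ^ 2) ≤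
          C * ∫ x in (0:ℝ)..1, u' x ^ 2 ∧
        (∫ x in (0:ℝ)..1, u' x ^ 2) ≤
          C * ((∫ x in (0:ℝ)..1, u x ^ 2 / σ x) +
            ∫ x in (0:ℝ)..1, η x * u' x ^ 2)) ∧
      (((∫ x in (0:ℝ)..1, u x ^ 2 / σ x) + ∫ x in (0:ℝ)..1, η x * u' x ^ 2) ≤
          C * ∫ x in (0:ℝ)..1, η x * u' x ^ 2 ∧
        (∫ x in (0:ℝ)..1, η x * u' x ^ 2) ≤
          C * ((∫ x in (0:ℝ)..1, u x ^ 2 / σ x) +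
            ∫ x in (0:ℝ)..1, η x * u' x ^ 2)) := by
  classical
  -- ## Step 1 : bounds on `η`
  set M := ∫ t in Ioo (0:ℝ) 1, |b t / a t| with hMdef
  have hM0 : 0 ≤ M := setIntegral_nonneg measurableSet_Ioo (fun t _ => abs_nonneg _)
  set g : ℝ → ℝ := (Ioo (0:ℝ) 1).indicator (fun x => b x / a x) with hgdef
  have hg_int : Integrable g := (IntegrableOn.integrable_indicator hba measurableSet_Ioo)
  have hF_cont : Continuous fun x => ∫ t in (1/2:ℝ)..x, g t :=
    intervalIntegral.continuous_primitive (fun a b => hg_int.intervalIntegrable) _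
  have hη_eq : ∀ x ∈ Ioo (0:ℝ) 1, η x = Real.exp (∫ t in (1/2:ℝ)..x, g t) := by
    intro x hx
    rw [hη x]
    congr 1
    apply intervalIntegral.integral_congr
    intro t ht
    have ht' : t ∈ Ioo (0:ℝ) 1 := by
      rcases le_total (1/2:ℝ) x with h | h
      · rw [uIcc_of_le h] at ht
        exact ⟨lt_of_lt_of_le (by norm_num) ht.1, lt_of_le_of_lt ht.2 hx.2⟩
      · rw [uIcc_of_ge h] at ht
        exact ⟨lt_of_lt_of_le hx.1 ht.1, lt_of_le_of_lt ht.2 (by norm_num)⟩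
    simp [hgdef, Set.indicator_of_mem ht']
  have hF_bdd : ∀ x : ℝ, |∫ t in (1/2:ℝ)..x, g t| ≤ M := by
    intro x
    have h1 : ‖∫ t in (1/2:ℝ)..x, g t‖ ≤ ∫ t in Set.uIoc (1/2:ℝ) x, ‖g t‖ :=
      intervalIntegral.norm_integral_le_integral_norm_uIoc
    have h2 : (∫ t in Set.uIoc (1/2:ℝ) x, ‖g t‖) ≤ ∫ t, ‖g t‖ := by
      apply setIntegral_le_integral hg_int.norm
      filter_upwards with t using norm_nonneg _
    have h3 : (∫ t, ‖g t‖) = M := by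
      rw [hMdef, ← integral_indicator measurableSet_Ioo]
      congr 1
      ext t
      by_cases h : t ∈ Ioo (0:ℝ) 1 <;> simp [hgdef, h, abs_div]
    calc |∫ t in (1/2:ℝ)..x, g t| ≤ ∫ t in Set.uIoc (1/2:ℝ) x, ‖g t‖ := h1
      _ ≤ ∫ t, ‖g t‖ := h2
      _ = M := h3
  set e₁ := Real.exp (-M) with he₁def
  set e₂ := Real.exp M with he₂def
  have he₁ : 0 < e₁ := Real.exp_pos _
  have he₂ : 0 < e₂ := Real.exp_pos _
  have hη_pos : ∀ x, 0 < η x := fun x => (hη x).symm ▸ Real.exp_pos _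
  have hη_bdd : ∀ x ∈ Ioo (0:ℝ) 1, e₁ ≤ η x ∧ η x ≤ e₂ := by
    intro x hx
    rw [hη_eq x hx]
    exact ⟨Real.exp_le_exp.2 (neg_le_of_abs_le (hF_bdd x)),
      Real.exp_le_exp.2 (le_of_abs_le (hF_bdd x))⟩
  -- ## Step 2 : lower bound on `a`
  obtain ⟨δ, hδpos, hmon⟩ := hmona
  set p := min δ 1 / 2 with hpdef
  have hp0 : 0 < p := by positivity
  have hpδ : p < δ := by
    simp only [hpdef]
    have h1 := min_le_left δ 1
    linarith only [h1, hδpos]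
  have hp1 : p ≤ 1 := by
    simp only [hpdef]
    have h1 := min_le_right δ 1
    linarith only [h1]
  have hap : 0 < a p := ha_pos p ⟨hp0, hp1⟩
  set r := p ^ K₁ / a p with hrdef
  have hr : 0 < r := div_pos (Real.rpow_pos_of_pos hp0 _) hap
  obtain ⟨z, hz, hzmin⟩ := isCompact_Icc.exists_isMinOn (s := Icc p 1)
    (Set.nonempty_Icc.2 hp1) (ha_cont.mono (Icc_subset_Icc hp0.le le_rfl))
  have hm : 0 < a z := ha_pos z ⟨lt_of_lt_of_le hp0 hz.1, hz.2⟩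
  set c := min r⁻¹ (a z) with hcdef
  have hc : 0 < c := lt_min (inv_pos.2 hr) hm
  have ha_lb : ∀ x ∈ Ioc (0:ℝ) 1, c * x ^ K₁ ≤ a x := by
    intro x hx
    have hxK : 0 < x ^ K₁ := Real.rpow_pos_of_pos hx.1 _
    rcases le_or_gt x p with h | h
    · have hmem : x ∈ Ioo (0:ℝ) δ := ⟨hx.1, lt_of_le_of_lt h hpδ⟩
      have hmono := hmon hmem ⟨hp0, hpδ⟩ h
      have hax : 0 < a x := ha_pos x hx
      have h2 : x ^ K₁ ≤ r * a x := (div_le_iff₀ hax).1 hmono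
      calc c * x ^ K₁ ≤ r⁻¹ * x ^ K₁ :=
            mul_le_mul_of_nonneg_right (min_le_left _ _) hxK.le
        _ ≤ a x := by
            rw [inv_mul_le_iff₀ hr]
            linarith only [h2]
    · have hxm : a z ≤ a x := hzmin ⟨h.le, hx.2⟩
      have hxK1 : x ^ K₁ ≤ 1 := Real.rpow_le_one hx.1.le hx.2 hK₁.1.le
      calc c * x ^ K₁ ≤ a z * x ^ K₁ :=
            mul_le_mul_of_nonneg_right (min_le_right _ _) hxK.le
        _ ≤ a z * 1 := mul_le_mul_of_nonneg_left hxK1 hm.le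
        _ = a z := mul_one _
        _ ≤ a x := hxm
  -- ## Step 3 : the weight `x ^ (1 - K₁)` is integrable on `(0,1)`
  have hJint : IntegrableOn (fun x : ℝ => x ^ (1 - K₁)) (Ioo 0 1) := by
    have h := (intervalIntegral.intervalIntegrable_rpow'
      (a := 0) (b := 1) (r := 1 - K₁) (by linarith only [hK₁.2])).1
    exact h.mono_set Ioo_subset_Ioc_self
  set J := ∫ t in Ioo (0:ℝ) 1, t ^ (1 - K₁) with hJdef
  have hJ0 : 0 ≤ J :=
    setIntegral_nonneg measurableSet_Ioo (fun t ht => Real.rpow_nonneg ht.1.le _)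
  -- ## Step 4 : constants
  set KA := e₂ * J / c with hKAdef
  have hKA0 : 0 ≤ KA := div_nonneg (mul_nonneg he₂.le hJ0) hc.le
  set ε := 1 - max lam 0 * CHP with hεdef
  have hε : 0 < ε := by
    rcases le_or_gt 0 lam with hl | hl
    · have h1 : lam * CHP < 1 := by
        rw [lt_div_iff₀ hCHP] at hlam
        linarith only [hlam]
      simp only [hεdef, max_eq_left hl]
      linarith only [h1]
    · simp only [hεdef, max_eq_right hl.le]
      norm_num
  set C := 1/ε + (1 + |lam| * CHP) + (KA/e₁ + 1) + (KA + e₂) + 1/e₁ + 1 with hCdef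
  have habs0 : 0 ≤ |lam| * CHP := mul_nonneg (abs_nonneg _) hCHP.le
  have hKAe : 0 ≤ KA / e₁ := div_nonneg hKA0 he₁.le
  have hinvε : 0 < 1/ε := by positivity
  have hinve₁ : 0 < 1/e₁ := by positivity
  have hC : 0 < C := by
    simp only [hCdef]
    linarith only [hinvε, habs0, hKAe, hKA0, he₂, hinve₁]
  have hC1 : 1 ≤ C := by
    simp only [hCdef]
    linarith only [hinvε, habs0, hKAe, hKA0, he₂, hinve₁]
  refine ⟨C, hC, ?_⟩
  intro u u' hu hu_cont hu0 hu1 hIntA hIntI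
  -- measurability of `u'`
  have hmeas_u' : AEStronglyMeasurable u' (volume.restrict (Ioo 0 1)) := by
    have heq : ∀ᵐ t ∂volume.restrict (Ioo (0:ℝ) 1), deriv u t = u' t := by
      filter_upwards [ae_restrict_mem measurableSet_Ioo] with t ht using (hu t ht).deriv
    exact (measurable_deriv u).aestronglyMeasurable.congr heq
  have hmeas_u'2 : AEStronglyMeasurable (fun t => u' t ^ 2) (volume.restrict (Ioo 0 1)) := by
    exact hmeas_u'.pow 2
  -- integrability of `u'`
  have hInt_u' : IntegrableOn u' (Ioo 0 1) := by
    have hbound : IntegrableOn (fun t : ℝ => 1 + u' t ^ 2) (Ioo 0 1) := by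
      have h1 : IntegrableOn (fun _ : ℝ => (1:ℝ)) (Ioo 0 1) :=
        integrableOn_const (by simp [Real.volume_Ioo])
      exact h1.add hIntI
    refine hbound.mono' hmeas_u' ?_
    filter_upwards with t
    simp only [Real.norm_eq_abs]
    linarith only [sq_nonneg (|u' t| - 1), sq_abs (u' t), sq_nonneg (u' t)]
  -- integrability of `η * u'^2`
  have hη_meas : AEStronglyMeasurable η (volume.restrict (Ioo 0 1)) := by
    have heq : ∀ᵐ x ∂volume.restrict (Ioo (0:ℝ) 1),
        Real.exp (∫ t in (1/2:ℝ)..x, g t) = η x := by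
      filter_upwards [ae_restrict_mem measurableSet_Ioo] with x hx using (hη_eq x hx).symm
    exact ((Real.continuous_exp.comp hF_cont).aestronglyMeasurable).congr heq
  have hIntB : IntegrableOn (fun x => η x * u' x ^ 2) (Ioo 0 1) := by
    refine Integrable.mono' (hIntI.const_mul e₂) (hη_meas.mul hmeas_u'2) ?_
    filter_upwards [ae_restrict_mem measurableSet_Ioo] with x hx
    have h1 := (hη_bdd x hx).2
    have h2 := (hη_pos x).le
    rw [Real.norm_eq_abs, abs_of_nonneg (mul_nonneg h2 (sq_nonneg _))]
    exact mul_le_mul_of_nonneg_right h1 (sq_nonneg _)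
  -- Hardy inequality
  have hH := hHardy u u' hu hu_cont hu0 hu1 hIntA hIntB
  -- pass to set integrals over `Ioo 0 1`
  simp only [intervalIntegral.integral_of_le (zero_le_one (α := ℝ)),
    integral_Ioc_eq_integral_Ioo] at hH ⊢
  set A := ∫ x in Ioo (0:ℝ) 1, u x ^ 2 / σ x with hAdef
  set B := ∫ x in Ioo (0:ℝ) 1, η x * u' x ^ 2 with hBdef
  set I := ∫ x in Ioo (0:ℝ) 1, u' x ^ 2 with hIdef
  set H := ∫ x in Ioo (0:ℝ) 1, u x ^ 2 / (σ x * d x) with hHdef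
  -- positivity of σ on (0,1)
  have hσ_pos : ∀ x ∈ Ioo (0:ℝ) 1, 0 < σ x := by
    intro x hx
    rw [hσ x]
    exact div_pos (ha_pos x ⟨hx.1, hx.2.le⟩) (hη_pos x)
  -- basic sign facts
  have hA0 : 0 ≤ A := setIntegral_nonneg measurableSet_Ioo
    (fun x hx => div_nonneg (sq_nonneg _) (hσ_pos x hx).le)
  have hB0 : 0 ≤ B := setIntegral_nonneg measurableSet_Ioo
    (fun x _ => mul_nonneg (hη_pos x).le (sq_nonneg _))
  have hI0 : 0 ≤ I := setIntegral_nonneg measurableSet_Ioo (fun x _ => sq_nonneg _)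
  have hH0 : 0 ≤ H := setIntegral_nonneg measurableSet_Ioo
    (fun x hx => div_nonneg (sq_nonneg _)
      (mul_nonneg (hσ_pos x hx).le (hd_pos x ⟨hx.1, hx.2.le⟩).le))
  have hHB : H ≤ CHP * B := hH
  -- `u x ^ 2 ≤ x * I`
  have hIoc_eq : (∫ t in Ioc (0:ℝ) 1, u' t ^ 2) = I := integral_Ioc_eq_integral_Ioo
  have hInt_u'2_Ioc : IntegrableOn (fun t => u' t ^ 2) (Ioc 0 1) :=
    (integrableOn_Ioc_iff_integrableOn_Ioo).2 hIntI
  have husq : ∀ x ∈ Ioo (0:ℝ) 1, u x ^ 2 ≤ x * I := by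
    intro x hx
    have hsub : Ioc (0:ℝ) x ⊆ Ioo (0:ℝ) 1 := fun t ht => ⟨ht.1, lt_of_le_of_lt ht.2 hx.2⟩
    have hIu' : IntegrableOn u' (Ioc 0 x) := hInt_u'.mono_set hsub
    have hIu'2 : IntegrableOn (fun t => u' t ^ 2) (Ioc 0 x) := hIntI.mono_set hsub
    have hftc : (∫ t in (0:ℝ)..x, u' t) = u x - u 0 := by
      apply intervalIntegral.integral_eq_sub_of_hasDeriv_right_of_le hx.1.le
        (hu_cont.mono (Icc_subset_Icc le_rfl hx.2.le))
        (fun t ht => (hu t ⟨ht.1, ht.2.trans hx.2⟩).hasDerivWithinAt)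
      exact (intervalIntegrable_iff_integrableOn_Ioc_of_le hx.1.le).2 hIu'
    have hux : u x = ∫ t in Ioc (0:ℝ) x, u' t := by
      rw [← intervalIntegral.integral_of_le hx.1.le, hftc, hu0, sub_zero]
    have habs : |u x| ≤ ∫ t in Ioc (0:ℝ) x, |u' t| := by
      rw [hux]
      simpa [Real.norm_eq_abs] using
        norm_integral_le_integral_norm (f := u') (μ := volume.restrict (Ioc (0:ℝ) x))
    have hcs := aux_sq_integral_abs_le u' x hx.1 hIu' hIu'2
    have hmono : (∫ t in Ioc (0:ℝ) x, u' t ^ 2) ≤ ∫ t in Ioc (0:ℝ) 1, u' t ^ 2 := by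
      apply setIntegral_mono_set hInt_u'2_Ioc
      · filter_upwards with t using sq_nonneg _
      · exact HasSubset.Subset.eventuallyLE (Ioc_subset_Ioc le_rfl hx.2.le)
    have h1 : u x ^ 2 ≤ (∫ t in Ioc (0:ℝ) x, |u' t|) ^ 2 := by
      rw [← sq_abs (u x)]
      exact pow_le_pow_left₀ (abs_nonneg _) habs 2
    calc u x ^ 2 ≤ (∫ t in Ioc (0:ℝ) x, |u' t|) ^ 2 := h1
      _ ≤ x * ∫ t in Ioc (0:ℝ) x, u' t ^ 2 := hcs
      _ ≤ x * ∫ t in Ioc (0:ℝ) 1, u' t ^ 2 := mul_le_mul_of_nonneg_left hmono hx.1.le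
      _ = x * I := by rw [hIoc_eq]
  -- `A ≤ KA * I`
  have hAI : A ≤ KA * I := by
    have hpt : ∀ x ∈ Ioo (0:ℝ) 1, u x ^ 2 / σ x ≤ (e₂ * I / c) * x ^ (1 - K₁) := by
      intro x hx
      have hax : 0 < a x := ha_pos x ⟨hx.1, hx.2.le⟩
      have hxK : 0 < x ^ K₁ := Real.rpow_pos_of_pos hx.1 _
      have hcP : c * x ^ K₁ ≤ a x := ha_lb x ⟨hx.1, hx.2.le⟩
      have hηx := hη_bdd x hx
      have hu2 := husq x hx
      have hstep : u x ^ 2 / σ x = u x ^ 2 * η x / a x := by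
        rw [hσ x, div_div_eq_mul_div]
      rw [hstep]
      have hnum : u x ^ 2 * η x ≤ (x * I) * e₂ :=
        mul_le_mul hu2 hηx.2 (hη_pos x).le (mul_nonneg hx.1.le hI0)
      have hdiv : u x ^ 2 * η x / a x ≤ ((x * I) * e₂) / (c * x ^ K₁) :=
        div_le_div₀ (mul_nonneg (mul_nonneg hx.1.le hI0) he₂.le) hnum
          (mul_pos hc hxK) hcP
      refine hdiv.trans (le_of_eq ?_)
      rw [Real.rpow_sub hx.1, Real.rpow_one]
      field_simp
    have h1 : A ≤ ∫ x in Ioo (0:ℝ) 1, (e₂ * I / c) * x ^ (1 - K₁) :=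
      setIntegral_mono_on hIntA (hJint.const_mul _) measurableSet_Ioo hpt
    have h2 : (∫ x in Ioo (0:ℝ) 1, (e₂ * I / c) * x ^ (1 - K₁)) = KA * I := by
      rw [integral_const_mul, hKAdef, ← hJdef]
      ring
    linarith only [h1, h2.symm.le, h2.le]
  -- `e₁ * I ≤ B ≤ e₂ * I`
  have hIB : e₁ * I ≤ B := by
    have h1 : (∫ x in Ioo (0:ℝ) 1, e₁ * u' x ^ 2) ≤ B := by
      apply setIntegral_mono_on (hIntI.const_mul e₁) hIntB measurableSet_Ioo
      intro x hx
      exact mul_le_mul_of_nonneg_right (hη_bdd x hx).1 (sq_nonneg _)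
    rwa [integral_const_mul] at h1
  have hBI : B ≤ e₂ * I := by
    have h1 : B ≤ ∫ x in Ioo (0:ℝ) 1, e₂ * u' x ^ 2 := by
      apply setIntegral_mono_on hIntB (hIntI.const_mul e₂) measurableSet_Ioo
      intro x hx
      exact mul_le_mul_of_nonneg_right (hη_bdd x hx).2 (sq_nonneg _)
    rwa [integral_const_mul] at h1
  -- ## final scalar estimates
  clear_value M e₁ e₂ p r c J KA ε C A B I H
  refine ⟨⟨?_, ?_⟩, ⟨?_, ?_⟩, ⟨?_, ?_⟩⟩
  · -- A + B ≤ C * ((A+B) - lam * H)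
    rcases le_or_gt 0 lam with hl | hl
    · have hmax : max lam 0 = lam := max_eq_left hl
      have h1 : lam * H ≤ lam * (CHP * B) := mul_le_mul_of_nonneg_left hHB hl
      have hν1 : 0 ≤ lam * CHP * A := mul_nonneg (mul_nonneg hl hCHP.le) hA0
      have hν2 : 0 ≤ lam * CHP * B := mul_nonneg (mul_nonneg hl hCHP.le) hB0
      have hε' : ε = 1 - lam * CHP := by rw [hεdef, hmax]
      have h2 : ε * (A + B) ≤ (A + B) - lam * H := by
        rw [hε']
        linarith only [h1, hν1, hν2]
      have hAB : (0:ℝ) ≤ A + B := by linarith only [hA0, hB0]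
      have h3 : 0 ≤ (A + B) - lam * H := le_trans (mul_nonneg hε.le hAB) h2
      have h4 : 1/ε ≤ C := by
        rw [hCdef]
        linarith only [habs0, hKAe, hKA0, he₂, hinve₁]
      have h5 : A + B ≤ (1/ε) * ((A + B) - lam * H) := by
        rw [one_div, inv_mul_eq_div, le_div_iff₀ hε]
        linarith only [h2]
      exact h5.trans (mul_le_mul_of_nonneg_right h4 h3)
    · have hml : (0:ℝ) ≤ -lam := by linarith only [hl]
      have h1 : 0 ≤ -lam * H := mul_nonneg hml hH0
      have hAB : (0:ℝ) ≤ A + B := by linarith only [hA0, hB0]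
      have hR0 : 0 ≤ (A + B) - lam * H := by linarith only [h1, hAB]
      have h6 := mul_le_mul_of_nonneg_right hC1 hR0
      linarith only [h6, h1, hAB]
  · -- (A+B) - lam*H ≤ C * (A+B)
    rcases le_or_gt 0 lam with hl | hl
    · have h1 : 0 ≤ lam * H := mul_nonneg hl hH0
      have hAB : (0:ℝ) ≤ A + B := by linarith only [hA0, hB0]
      have h2 := mul_le_mul_of_nonneg_right hC1 hAB
      linarith only [h1, h2]
    · have hml : (0:ℝ) ≤ -lam := by linarith only [hl]
      have h1 : -lam * H ≤ -lam * (CHP * B) := mul_le_mul_of_nonneg_left hHB hml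
      have habs : |lam| = -lam := abs_of_neg hl
      have hAB : (0:ℝ) ≤ A + B := by linarith only [hA0, hB0]
      have hC' : 1 + -lam * CHP ≤ C := by
        rw [hCdef, habs]
        linarith only [hinvε, hKAe, hKA0, he₂, hinve₁]
      have h2 := mul_le_mul_of_nonneg_right hC' hAB
      have h3 : 0 ≤ -lam * CHP * A := mul_nonneg (mul_nonneg hml hCHP.le) hA0
      linarith only [h1, h2, h3]
  · -- A + B ≤ C * I
    have hC' : KA + e₂ ≤ C := by
      rw [hCdef]
      linarith only [hinvε, habs0, hKAe, hinve₁]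
    have h1 := mul_le_mul_of_nonneg_right hC' hI0
    linarith only [hAI, hBI, h1]
  · -- I ≤ C * (A+B)
    have hC' : 1/e₁ ≤ C := by
      rw [hCdef]
      linarith only [hinvε, habs0, hKAe, hKA0, he₂]
    have h1 : 1 ≤ C * e₁ := by
      rw [← div_le_iff₀ he₁]
      simpa [one_div] using hC'
    have hAB : B ≤ A + B := by linarith only [hA0]
    calc I ≤ (C * e₁) * I := le_mul_of_one_le_left hI0 h1
      _ = C * (e₁ * I) := by ring
      _ ≤ C * B := mul_le_mul_of_nonneg_left hIB hC.le
      _ ≤ C * (A + B) := mul_le_mul_of_nonneg_left hAB hC.le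
  · -- A + B ≤ C * B
    have hIle : I ≤ B / e₁ := (le_div_iff₀ he₁).2 (by linarith only [hIB])
    have hA' : A ≤ KA / e₁ * B := by
      calc A ≤ KA * I := hAI
        _ ≤ KA * (B / e₁) := mul_le_mul_of_nonneg_left hIle hKA0
        _ = KA / e₁ * B := by ring
    have hC' : KA / e₁ + 1 ≤ C := by
      rw [hCdef]
      linarith only [hinvε, habs0, hKA0, he₂, hinve₁]
    have h1 := mul_le_mul_of_nonneg_right hC' hB0
    linarith only [hA', h1]
  · -- B ≤ C * (A+B)
    have hAB : (0:ℝ) ≤ A + B := by linarith only [hA0, hB0]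
    have h1 := mul_le_mul_of_nonneg_right hC1 hAB
    linarith only [h1, hA0]
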